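/- Let N be a feed-forward network with layers C₀, C₁, …, C_m, m ≥ 1, and adjacency matrices A₁, …, A_k, and let f₁, …, f_k be reals with Σ_{i=1}^k f_i ≠ 0. Then the generalized kernel of J = Σ_{i=1}^k f_i·A_i (i.e., with internal linearization f₀ = 0) has dimension |C₁| + |C₂| + … + |C_m| = |C| − |C₀|. -/
import Mathlib

section Aux

variable {C : Type*} [Fintype C] [DecidableEq C] {k : ℕ}

lemma stmt12_apply (σ : Fin k → C → C) (f : Fin k → ℝ) (v : C → ℝ) (c : C) :
    (Matrix.toLin'
      (∑ i, f i • Matrix.of (fun c c' => if c' = σ i c then (1 : ℝ) else 0))) v c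
      = ∑ i, f i * v (σ i c) := by
  simp [Matrix.toLin'_apply, Matrix.mulVec, dotProduct, Matrix.sum_apply,
    Finset.sum_mul, mul_ite, ite_mul, Finset.sum_comm (s := Finset.univ (α := C)),
    Finset.sum_ite_eq']

end Aux

theorem stmt_12 {C : Type*} [Fintype C] [DecidableEq C] {k : ℕ}
    (σ : Fin k → C → C) (m : ℕ) (hm : 1 ≤ m)
    (layer : C → ℕ) (hlayer : ∀ c, layer c ≤ m)
    (hsurj : ∀ j ≤ m, ∃ c, layer c = j)
    (hfix : ∀ i c, layer c = 0 → σ i c = c)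
    (hdown : ∀ i c j, layer c = j + 1 → layer (σ i c) = j)
    (f : Fin k → ℝ) (hval : ∑ i, f i ≠ 0) :
    Module.finrank ℝ
        (Module.End.maxGenEigenspace
          (Matrix.toLin'
            (∑ i, f i • Matrix.of (fun c c' => if c' = σ i c then (1 : ℝ) else 0)))
          0) =
      Fintype.card C - (Finset.univ.filter (fun c => layer c = 0)).card := by
  set J := Matrix.toLin'
      (∑ i, f i • Matrix.of (fun c c' => if c' = σ i c then (1 : ℝ) else 0)) with hJ
  have happ : ∀ (v : C → ℝ) (c : C), J v c = ∑ i, f i * v (σ i c) :=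
    stmt12_apply σ f
  -- the submodule of functions vanishing on layer 0
  set W : Submodule ℝ (C → ℝ) :=
    { carrier := {v | ∀ c, layer c = 0 → v c = 0}
      add_mem' := by intro a b ha hb c hc; simp [ha c hc, hb c hc]
      zero_mem' := by intro c hc; rfl
      smul_mem' := by intro r a ha c hc; simp [ha c hc] } with hW
  -- iterated action on layer-0 cells
  have hiter0 : ∀ (r : ℕ) (v : C → ℝ) (c : C), layer c = 0 →
      (J ^ r) v c = (∑ i, f i) ^ r * v c := by
    intro r
    induction r with
    | zero => intro v c hc; simp
    | succ n ih =>
      intro v c hc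
      have : (J ^ (n+1)) v = (J ^ n) (J v) := by
        rw [pow_succ, Module.End.mul_apply]
      rw [this, ih (J v) c hc, happ v c]
      have : ∀ i, f i * v (σ i c) = f i * v c := by
        intro i; rw [hfix i c hc]
      rw [Finset.sum_congr rfl (fun i _ => this i), ← Finset.sum_mul, pow_succ]
      ring
  -- vanishing propagation
  have hvan : ∀ (r : ℕ) (v : C → ℝ), (∀ c, layer c < r + 1 → v c = 0) →
      ∀ c, layer c < r + 2 → J v c = 0 := by
    intro r v hv c hc
    rw [happ]
    apply Finset.sum_eq_zero
    intro i _
    rcases Nat.eq_zero_or_pos (layer c) with h0 | hpos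
    · rw [hfix i c h0, hv c (by omega)]; ring
    · obtain ⟨j, hj⟩ : ∃ j, layer c = j + 1 := ⟨layer c - 1, by omega⟩
      rw [hv (σ i c) (by rw [hdown i c j hj]; omega)]; ring
  have hvan' : ∀ (r : ℕ) (v : C → ℝ), (∀ c, layer c = 0 → v c = 0) →
      ∀ c, layer c < r + 1 → (J ^ r) v c = 0 := by
    intro r
    induction r with
    | zero => intro v hv c hc; simpa using hv c (by omega)
    | succ n ih =>
      intro v hv c hc
      have : (J ^ (n+1)) v = J ((J ^ n) v) := by rw [pow_succ', Module.End.mul_apply]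
      rw [this]
      exact hvan n ((J ^ n) v) (fun c' hc' => ih v hv c' hc') c hc
  -- the generalized kernel equals W
  have hkey : Module.End.maxGenEigenspace J 0 = W := by
    ext v
    rw [Module.End.mem_maxGenEigenspace]
    constructor
    · rintro ⟨r, hr⟩ c hc
      simp only [zero_smul, sub_zero] at hr
      have h1 : (J ^ r) v c = 0 := by rw [hr]; rfl
      rw [hiter0 r v c hc] at h1
      have := pow_ne_zero r hval
      exact by
        rcases mul_eq_zero.mp h1 with h | h
        · exact absurd h this
        · exact h
    · intro hv
      refine ⟨m, ?_⟩
      simp only [zero_smul, sub_zero]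
      funext c
      exact hvan' m v hv c (by have := hlayer c; omega)
  rw [hkey]
  -- compute the dimension of W
  have e : W ≃ₗ[ℝ] ({c : C // ¬ layer c = 0} → ℝ) :=
    { toFun := fun v c => v.1 c.1
      map_add' := fun a b => rfl
      map_smul' := fun r a => rfl
      invFun := fun g => ⟨fun c => if h : layer c = 0 then 0 else g ⟨c, h⟩,
        by intro c hc; simp [hc]⟩
      left_inv := by
        rintro ⟨v, hv⟩
        ext c
        by_cases h : layer c = 0
        · simp [h, hv c h]
        · simp [h]
      right_inv := by
        intro g
        ext c
        simp [c.2] }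
  rw [LinearEquiv.finrank_eq e, Module.finrank_pi, Fintype.card_subtype]
  rw [Finset.filter_not, Finset.card_sdiff_of_subset (Finset.filter_subset _ _), Finset.card_univ]
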